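/- arXiv:1701.04196 — 2 statements merged into one kernel-verified Lean document; each statement's English description precedes it below -/
import Mathlib

section
/- The kernel of the character ε_∞ : B_ℤ → ℂ, f ↦ lim_{k→∞} f(k), equals the closed linear span of {1_n − 1_m : n, m ∈ ℤ, n < m}, and this set equals the set of all f ∈ B_ℤ vanishing at infinity, i.e., those f with f(k) → 0 both as k → +∞ and as k → −∞. -/
open BoundedContinuousFunction Filter Topology

/-- The indicator function of `{k : ℤ | n ≤ k}` as a bounded (continuous) function `ℤ → ℂ`,
an element of `ℓ∞(ℤ, ℂ)`. -/
noncomputable def indBZ (n : ℤ) : ℤ →ᵇ ℂ :=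
  BoundedContinuousFunction.ofNormedAddCommGroup
    (fun k => if n ≤ k then (1:ℂ) else 0)
    (continuous_of_discreteTopology) 1
    (fun k => by by_cases h : n ≤ k <;> simp [h])

/-- `B_ℤ`: the closed linear span of `{1_n : n ∈ ℤ}` in `ℓ∞(ℤ, ℂ)`. -/
noncomputable def BZ : Submodule ℂ (ℤ →ᵇ ℂ) :=
  (Submodule.span ℂ (Set.range indBZ)).topologicalClosure

/-- The closed linear span of `{1_n − 1_m : n, m ∈ ℤ, n < m}` in `ℓ∞(ℤ, ℂ)`. -/
noncomputable def C0span : Submodule ℂ (ℤ →ᵇ ℂ) :=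
  (Submodule.span ℂ {g : ℤ →ᵇ ℂ | ∃ n m : ℤ, n < m ∧ g = indBZ n - indBZ m}).topologicalClosure

lemma indBZ_apply (n k : ℤ) : indBZ n k = if n ≤ k then (1:ℂ) else 0 := rfl

lemma norm_indBZ_le (n : ℤ) : ‖indBZ n‖ ≤ 1 :=
  BoundedContinuousFunction.norm_ofNormedAddCommGroup_le _ zero_le_one _

/-- The generating set of differences. -/
def DZ : Set (ℤ →ᵇ ℂ) := {g : ℤ →ᵇ ℂ | ∃ n m : ℤ, n < m ∧ g = indBZ n - indBZ m}

lemma C0span_eq : C0span = (Submodule.span ℂ DZ).topologicalClosure := rfl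

/-- functions tending to 0 along a filter form a submodule -/
noncomputable def TZ (l : Filter ℤ) : Submodule ℂ (ℤ →ᵇ ℂ) where
  carrier := {f | Tendsto (fun k => f k) l (𝓝 (0:ℂ))}
  zero_mem' := by simpa using (tendsto_const_nhds : Tendsto (fun _ : ℤ => (0:ℂ)) l _)
  add_mem' := by
    intro f g hf hg
    have := hf.add hg
    simpa using this
  smul_mem' := by
    intro c f hf
    have := hf.const_smul c
    simpa using this

lemma tendsto_zero_closure {l : Filter ℤ} {S : Set (ℤ →ᵇ ℂ)}
    (hS : ∀ g ∈ S, Tendsto (fun k => g k) l (𝓝 (0:ℂ))) {f : ℤ →ᵇ ℂ}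
    (hf : f ∈ closure S) : Tendsto (fun k => f k) l (𝓝 (0:ℂ)) := by
  rw [Metric.tendsto_nhds]
  intro ε hε
  obtain ⟨g, hg, hfg⟩ := Metric.mem_closure_iff.mp hf (ε/2) (by positivity)
  filter_upwards [Metric.tendsto_nhds.mp (hS g hg) (ε/2) (by positivity)] with k hk
  have h1 : dist (f k) (g k) ≤ dist f g := dist_coe_le_dist k
  calc dist (f k) 0 ≤ dist (f k) (g k) + dist (g k) 0 := dist_triangle _ _ _
    _ < ε/2 + ε/2 := by linarith
    _ = ε := by ring

lemma DZ_tendsto_atTop : ∀ g ∈ DZ, Tendsto (fun k => g k) atTop (𝓝 (0:ℂ)) := by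
  rintro g ⟨n, m, hnm, rfl⟩
  refine (tendsto_const_nhds : Tendsto (fun _ : ℤ => (0:ℂ)) _ _).congr'
    ((eventually_ge_atTop m).mono fun k hk => ?_)
  have hn : n ≤ k := le_of_lt (lt_of_lt_of_le hnm hk)
  simp [indBZ_apply, hn, hk]

lemma DZ_tendsto_atBot : ∀ g ∈ DZ, Tendsto (fun k => g k) atBot (𝓝 (0:ℂ)) := by
  rintro g ⟨n, m, hnm, rfl⟩
  refine (tendsto_const_nhds : Tendsto (fun _ : ℤ => (0:ℂ)) _ _).congr'
    ((eventually_le_atBot (n-1)).mono fun k hk => ?_)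
  have hn : ¬ n ≤ k := by omega
  have hm : ¬ m ≤ k := by omega
  simp [indBZ_apply, hn, hm]

lemma spanDZ_tendsto (l : Filter ℤ) (h : ∀ g ∈ DZ, Tendsto (fun k => g k) l (𝓝 (0:ℂ)))
    {f : ℤ →ᵇ ℂ} (hf : f ∈ Submodule.span ℂ DZ) :
    Tendsto (fun k => f k) l (𝓝 (0:ℂ)) := by
  have hle : Submodule.span ℂ DZ ≤ TZ l := Submodule.span_le.mpr (fun g hg => h g hg)
  exact hle hf

lemma C0span_tendsto {f : ℤ →ᵇ ℂ} (hf : f ∈ C0span) {l : Filter ℤ}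
    (h : ∀ g ∈ DZ, Tendsto (fun k => g k) l (𝓝 (0:ℂ))) :
    Tendsto (fun k => f k) l (𝓝 (0:ℂ)) := by
  have hf' : f ∈ closure (Submodule.span ℂ DZ : Set (ℤ →ᵇ ℂ)) := hf
  exact tendsto_zero_closure (fun g hg => spanDZ_tendsto l h hg) hf'

lemma C0span_le_BZ : C0span ≤ BZ := by
  rw [C0span_eq]
  apply Submodule.topologicalClosure_minimal
  · rw [Submodule.span_le]
    rintro g ⟨n, m, hnm, rfl⟩
    exact sub_mem
      (Submodule.le_topologicalClosure _ (Submodule.subset_span ⟨n, rfl⟩))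
      (Submodule.le_topologicalClosure _ (Submodule.subset_span ⟨m, rfl⟩))
  · exact Submodule.isClosed_topologicalClosure _

/-- Elements of span of the indicators: eventually constant, and subtracting the limit
times a far indicator lands in the span of differences. -/
noncomputable def Pmod : Submodule ℂ (ℤ →ᵇ ℂ) where
  carrier := {g | ∃ L : ℂ, ∃ N : ℤ,
    (∀ m : ℤ, N ≤ m → g - L • indBZ m ∈ Submodule.span ℂ DZ) ∧ (∀ k : ℤ, N ≤ k → g k = L)}
  zero_mem' := ⟨0, 0, fun m _ => by simpa using (Submodule.zero_mem (Submodule.span ℂ DZ)), fun k _ => rfl⟩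
  add_mem' := by
    rintro f g ⟨L₁, N₁, h₁, v₁⟩ ⟨L₂, N₂, h₂, v₂⟩
    refine ⟨L₁ + L₂, max N₁ N₂, fun m hm => ?_, fun k hk => ?_⟩
    · have : f + g - (L₁ + L₂) • indBZ m = (f - L₁ • indBZ m) + (g - L₂ • indBZ m) := by
        rw [add_smul]; abel
      rw [this]
      exact add_mem (h₁ m ((le_max_left _ _).trans hm)) (h₂ m ((le_max_right _ _).trans hm))
    · have hk₁ := v₁ k ((le_max_left _ _).trans hk)
      have hk₂ := v₂ k ((le_max_right _ _).trans hk)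
      simp [hk₁, hk₂]
  smul_mem' := by
    rintro c f ⟨L, N, h, v⟩
    refine ⟨c * L, N, fun m hm => ?_, fun k hk => ?_⟩
    · have : c • f - (c * L) • indBZ m = c • (f - L • indBZ m) := by
        rw [mul_smul, smul_sub]
      rw [this]
      exact Submodule.smul_mem _ c (h m hm)
    · simp [v k hk]

lemma span_range_le_Pmod : Submodule.span ℂ (Set.range indBZ) ≤ Pmod := by
  rw [Submodule.span_le]
  rintro _ ⟨n, rfl⟩
  refine ⟨1, n + 1, fun m hm => ?_, fun k hk => ?_⟩
  · rw [one_smul]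
    exact Submodule.subset_span ⟨n, m, by omega, rfl⟩
  · simp [indBZ_apply, show n ≤ k by omega]

lemma mem_C0span_of_tendsto {f : ℤ →ᵇ ℂ} (hfB : f ∈ BZ)
    (h0 : Tendsto (fun k => f k) atTop (𝓝 (0:ℂ))) : f ∈ C0span := by
  rw [C0span_eq]
  have : f ∈ closure (Submodule.span ℂ DZ : Set (ℤ →ᵇ ℂ)) := by
    rw [Metric.mem_closure_iff]
    intro ε hε
    have hfB' : f ∈ closure (Submodule.span ℂ (Set.range indBZ) : Set (ℤ →ᵇ ℂ)) := hfB
    obtain ⟨g, hg, hfg⟩ := Metric.mem_closure_iff.mp hfB' (ε/3) (by positivity)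
    obtain ⟨L, N, hspan, hval⟩ := span_range_le_Pmod hg
    obtain ⟨k, hkN, hk⟩ : ∃ k : ℤ, N ≤ k ∧ dist (f k) 0 < ε/3 := by
      have h1 := Metric.tendsto_nhds.mp h0 (ε/3) (by positivity)
      obtain ⟨k, hk1, hk2⟩ := ((eventually_ge_atTop N).and h1).exists
      exact ⟨k, hk1, hk2⟩
    have hL : ‖L‖ < 2*ε/3 := by
      have h1 : dist (g k) (f k) ≤ dist g f := dist_coe_le_dist k
      have h2 : ‖L‖ = dist (g k) 0 := by rw [hval k hkN, dist_zero_right]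
      have h3 : dist (g k) 0 ≤ dist (g k) (f k) + dist (f k) 0 := dist_triangle _ _ _
      have h4 : dist g f = dist f g := dist_comm _ _
      linarith
    refine ⟨g - L • indBZ N, hspan N le_rfl, ?_⟩
    have h5 : dist f (g - L • indBZ N) ≤ dist f g + ‖L • indBZ N‖ := by
      rw [dist_eq_norm]
      have : f - (g - L • indBZ N) = (f - g) + L • indBZ N := by abel
      rw [this]
      calc ‖(f - g) + L • indBZ N‖ ≤ ‖f - g‖ + ‖L • indBZ N‖ := norm_add_le _ _
        _ = dist f g + ‖L • indBZ N‖ := by rw [dist_eq_norm]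
    have h6 : ‖L • indBZ N‖ ≤ ‖L‖ := by
      rw [norm_smul]
      calc ‖L‖ * ‖indBZ N‖ ≤ ‖L‖ * 1 := by
            exact mul_le_mul_of_nonneg_left (norm_indBZ_le N) (norm_nonneg _)
        _ = ‖L‖ := mul_one _
    linarith
  exact this

/-- The kernel of the character `ε_∞ : B_ℤ → ℂ`, `f ↦ lim_{k→∞} f k` (i.e., the set of
`f ∈ B_ℤ` with `f k → 0` as `k → +∞`) equals the closed linear span of
`{1_n − 1_m : n < m}`, and this set equals the set of all `f ∈ B_ℤ` vanishing at infinity,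
i.e., those with `f k → 0` both as `k → +∞` and as `k → −∞`. -/
theorem ker_limit_character_BZ :
    {f : ℤ →ᵇ ℂ | f ∈ BZ ∧ Tendsto (fun k : ℤ => f k) atTop (𝓝 (0 : ℂ))} =
        (C0span : Set (ℤ →ᵇ ℂ)) ∧
    (C0span : Set (ℤ →ᵇ ℂ)) =
        {f : ℤ →ᵇ ℂ | f ∈ BZ ∧ Tendsto (fun k : ℤ => f k) atTop (𝓝 (0 : ℂ)) ∧
          Tendsto (fun k : ℤ => f k) atBot (𝓝 (0 : ℂ))} := by
  constructor
  · apply Set.Subset.antisymm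
    · rintro f ⟨hfB, h0⟩
      exact mem_C0span_of_tendsto hfB h0
    · intro f hf
      exact ⟨C0span_le_BZ hf, C0span_tendsto hf DZ_tendsto_atTop⟩
  · apply Set.Subset.antisymm
    · intro f hf
      exact ⟨C0span_le_BZ hf, C0span_tendsto hf DZ_tendsto_atTop,
        C0span_tendsto hf DZ_tendsto_atBot⟩
    · rintro f ⟨hfB, h0, _⟩
      exact mem_C0span_of_tendsto hfB h0
end

section
/- Suppose Y is Hausdorff, and let Q denote the quotient of (Z∞ × Y) × 𝕋 by the Williams relation for the ℤ-action on Z∞ × Y, and let R denote the quotient of Y × 𝕋 by the Williams relation for the ℤ-action n·y = σⁿ(y) on Y, both with quotient topologies. Then the map ĵ : R → Q sending the class of (φ, z) to the class of ((∞, φ), z) is well defined and is a homeomorphism of R onto the subset of Q consisting of classes of points with first coordinate ∞; this subset is closed in Q and equals the complement of the image of ι : Y → Q, φ ↦ [((0, φ), 1)]. -/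
open Filter Topology

/-- The order topology on `Z∞ = ℤ ∪ {∞}` (formally `WithTop ℤ`): every `n ∈ ℤ` is isolated,
and the sets `J_n = {k : ℤ | n ≤ k} ∪ {∞}` form a neighborhood basis at `∞`. -/
noncomputable instance : TopologicalSpace (WithTop ℤ) := Preorder.topology (WithTop ℤ)

instance : OrderTopology (WithTop ℤ) := ⟨rfl⟩

/-- The integer power `σⁿ` (`n : ℤ`) of a homeomorphism `σ : Y ≃ₜ Y`, as a function. -/
def sigmaPow {Y : Type*} [TopologicalSpace Y] (σ : Y ≃ₜ Y) (n : ℤ) : Y → Y :=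
  fun y => (σ.toEquiv ^ n) y

/-- The action of `ℤ` on `Z∞ × Y`: `n·(m, y) = (m + n, y)` for `m ∈ ℤ`, and
`n·(∞, y) = (∞, σⁿ(y))`. -/
def actZ {Y : Type*} [TopologicalSpace Y] (σ : Y ≃ₜ Y) (n : ℤ) (p : WithTop ℤ × Y) :
    WithTop ℤ × Y :=
  (p.1.map (· + n), if p.1 = ⊤ then sigmaPow σ n p.2 else p.2)

/-- The Williams relation on `X × 𝕋` associated to an action `act` of `ℤ` on a topological
space `X`: `(x, z) ∼ (y, w)` iff the closures of the `ℤ`-orbits of `x` and `y` coincide and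
`zⁿ = wⁿ` for all `n` in the stability group of `x`. -/
def williams {X : Type*} [TopologicalSpace X] (act : ℤ → X → X)
    (p q : X × Circle) : Prop :=
  closure (Set.range fun n : ℤ => act n p.1) = closure (Set.range fun n : ℤ => act n q.1) ∧
  ∀ n : ℤ, act n p.1 = p.1 → p.2 ^ n = q.2 ^ n

/-- The map `ι : Y → Q` into the quotient `Q` of `(Z∞ × Y) × 𝕋` by the Williams relation,
sending `φ` to the class of `((0, φ), 1)`. -/
noncomputable def iotaQ {Y : Type*} [TopologicalSpace Y] (σ : Y ≃ₜ Y) :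
    Y → Quot (williams (actZ σ)) :=
  fun φ => Quot.mk _ ((((0 : ℤ) : WithTop ℤ), φ), (1 : Circle))

section Aux

variable {Y : Type*} [TopologicalSpace Y] (σ : Y ≃ₜ Y)

lemma actZ_zero (p : WithTop ℤ × Y) : actZ σ 0 p = p := by
  obtain ⟨m, y⟩ := p
  cases m <;> simp [actZ, sigmaPow]

lemma actZ_coe (n k : ℤ) (y : Y) :
    actZ σ n (((k : ℤ) : WithTop ℤ), y) = (((k + n : ℤ) : WithTop ℤ), y) := by
  simp [actZ]

lemma actZ_top (n : ℤ) (y : Y) :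
    actZ σ n ((⊤ : WithTop ℤ), y) = ((⊤ : WithTop ℤ), sigmaPow σ n y) := by
  simp [actZ]

lemma williams_top_iff {a b : (WithTop ℤ × Y) × Circle} (h : williams (actZ σ) a b) :
    a.1.1 = ⊤ ↔ b.1.1 = ⊤ := by
  obtain ⟨hcl, -⟩ := h
  have key : ∀ c d : (WithTop ℤ × Y) × Circle,
      closure (Set.range fun n : ℤ => actZ σ n c.1) =
        closure (Set.range fun n : ℤ => actZ σ n d.1) →
      c.1.1 = ⊤ → d.1.1 = ⊤ := by
    intro c d hcd hc
    have hd : d.1 ∈ closure (Set.range fun n : ℤ => actZ σ n d.1) :=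
      subset_closure ⟨0, actZ_zero σ d.1⟩
    rw [← hcd] at hd
    have hsub : closure (Set.range fun n : ℤ => actZ σ n c.1) ⊆
        {x : WithTop ℤ × Y | x.1 = ⊤} := by
      apply closure_minimal
      · rintro _ ⟨n, rfl⟩
        simp [actZ, hc]
      · exact isClosed_singleton.preimage continuous_fst
    exact hsub hd
  exact ⟨key a b hcl, key b a hcl.symm⟩

lemma orbit_top_closure (ψ : Y) :
    closure (Set.range fun n : ℤ => actZ σ n ((⊤ : WithTop ℤ), ψ)) =
      {(⊤ : WithTop ℤ)} ×ˢ closure (Set.range fun n : ℤ => sigmaPow σ n ψ) := by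
  have : (Set.range fun n : ℤ => actZ σ n ((⊤ : WithTop ℤ), ψ)) =
      {(⊤ : WithTop ℤ)} ×ˢ (Set.range fun n : ℤ => sigmaPow σ n ψ) := by
    ext ⟨m, y⟩
    simp only [Set.mem_range, actZ_top, Prod.ext_iff, Set.mem_prod, Set.mem_singleton_iff]
    aesop
  rw [this, closure_prod_eq, closure_singleton]

lemma williams_top_iff_V {φ φ' : Y} {z z' : Circle} :
    williams (actZ σ) (((⊤ : WithTop ℤ), φ), z) (((⊤ : WithTop ℤ), φ'), z') ↔
      williams (fun (n : ℤ) (y : Y) => sigmaPow σ n y) (φ, z) (φ', z') := by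
  have prodinj : ∀ A B : Set Y,
      ({(⊤ : WithTop ℤ)} ×ˢ A = {(⊤ : WithTop ℤ)} ×ˢ B) ↔ A = B := by
    intro A B
    constructor
    · intro h
      ext y
      have := Set.ext_iff.mp h ((⊤ : WithTop ℤ), y)
      simpa using this
    · rintro rfl; rfl
  have hstab : ∀ (n : ℤ) (ψ : Y),
      actZ σ n ((⊤ : WithTop ℤ), ψ) = ((⊤ : WithTop ℤ), ψ) ↔ sigmaPow σ n ψ = ψ := by
    intro n ψ
    rw [actZ_top]
    simp [Prod.ext_iff]
  constructor
  · rintro ⟨h1, h2⟩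
    refine ⟨?_, ?_⟩
    · rw [orbit_top_closure, orbit_top_closure] at h1
      exact (prodinj _ _).mp h1
    · intro n hn
      exact h2 n ((hstab n φ).mpr hn)
  · rintro ⟨h1, h2⟩
    refine ⟨?_, ?_⟩
    · rw [orbit_top_closure, orbit_top_closure]
      rw [h1]
    · intro n hn
      exact h2 n ((hstab n φ).mp hn)

lemma eqvGen_top {x y : (WithTop ℤ × Y) × Circle}
    (h : Relation.EqvGen (williams (actZ σ)) x y) :
    (x.1.1 = ⊤ ↔ y.1.1 = ⊤) ∧
      (x.1.1 = ⊤ → Relation.EqvGen (williams (fun (n : ℤ) (y : Y) => sigmaPow σ n y))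
        (x.1.2, x.2) (y.1.2, y.2)) := by
  induction h with
  | rel a b hab =>
      have hiff := williams_top_iff σ hab
      refine ⟨hiff, fun ha => ?_⟩
      have hb := hiff.mp ha
      apply Relation.EqvGen.rel
      have ea : (((⊤ : WithTop ℤ), a.1.2), a.2) = a := by rw [← ha]
      have eb : (((⊤ : WithTop ℤ), b.1.2), b.2) = b := by rw [← hb]
      exact (williams_top_iff_V σ).mp (by rw [ea, eb]; exact hab)
  | refl a => exact ⟨Iff.rfl, fun _ => Relation.EqvGen.refl _⟩
  | symm a b hab ih =>
      exact ⟨ih.1.symm, fun hb => Relation.EqvGen.symm _ _ (ih.2 (ih.1.mpr hb))⟩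
  | trans a b c hab hbc ih1 ih2 =>
      exact ⟨ih1.1.trans ih2.1,
        fun ha => Relation.EqvGen.trans _ _ _ (ih1.2 ha) (ih2.2 (ih1.1.mp ha))⟩

end Aux

/-- For Hausdorff `Y`, the map `ĵ : R → Q`, `[(φ, z)] ↦ [((∞, φ), z)]`, is well defined and
is a homeomorphism of `R` onto the subset of `Q` consisting of classes of points with first
coordinate `∞`; this subset is closed in `Q` and equals the complement of the image of
`ι : Y → Q`. -/
theorem jhat_properties {Y : Type*} [TopologicalSpace Y] [T2Space Y] (σ : Y ≃ₜ Y) :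
    ∃ j : Quot (williams (fun (n : ℤ) (y : Y) => sigmaPow σ n y)) →
        Quot (williams (actZ σ)),
      (∀ (φ : Y) (z : Circle),
        j (Quot.mk _ (φ, z)) = Quot.mk _ (((⊤ : WithTop ℤ), φ), z)) ∧
      Topology.IsEmbedding j ∧
      Set.range j =
        {q : Quot (williams (actZ σ)) | ∃ (φ : Y) (z : Circle),
          q = Quot.mk _ (((⊤ : WithTop ℤ), φ), z)} ∧
      IsClosed (Set.range j) ∧
      Set.range j = (Set.range (iotaQ σ))ᶜ := by
  set V := williams (fun (n : ℤ) (y : Y) => sigmaPow σ n y) with hV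
  set W := williams (actZ σ) with hW
  set f : Y × Circle → (WithTop ℤ × Y) × Circle :=
    fun p => (((⊤ : WithTop ℤ), p.1), p.2) with hf
  have hsound : ∀ a b : Y × Circle, V a b → W (f a) (f b) := by
    rintro ⟨φ, z⟩ ⟨φ', z'⟩ h
    exact (williams_top_iff_V σ).mpr h
  set j : Quot V → Quot W := Quot.map f hsound with hj
  have hmk : ∀ (φ : Y) (z : Circle),
      j (Quot.mk _ (φ, z)) = Quot.mk _ (((⊤ : WithTop ℤ), φ), z) := fun _ _ => rfl
  -- injectivity
  have hinj : Function.Injective j := by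
    intro q1 q2 h
    obtain ⟨p1, rfl⟩ := Quot.exists_rep q1
    obtain ⟨p2, rfl⟩ := Quot.exists_rep q2
    have hE : Relation.EqvGen W (f p1) (f p2) := Quot.eq.mp h
    have := (eqvGen_top σ hE).2 rfl
    exact Quot.eqvGen_sound this
  -- continuity
  have hcont : Continuous j := by
    rw [(isQuotientMap_quot_mk (r := V)).continuous_iff]
    exact continuous_quot_mk.comp
      ((continuous_const.prodMk continuous_fst).prodMk continuous_snd)
  -- closed map
  have hclosed : IsClosedMap j := by
    intro C hC
    set D : Set ((WithTop ℤ × Y) × Circle) :=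
      {x | x.1.1 = ⊤ ∧ (x.1.2, x.2) ∈ Quot.mk V ⁻¹' C} with hD
    have himg : j '' C = Quot.mk W '' D := by
      ext q
      constructor
      · rintro ⟨c, hc, rfl⟩
        obtain ⟨⟨φ, z⟩, rfl⟩ := Quot.exists_rep c
        exact ⟨(((⊤ : WithTop ℤ), φ), z), ⟨rfl, hc⟩, rfl⟩
      · rintro ⟨x, ⟨hx1, hx2⟩, rfl⟩
        refine ⟨Quot.mk V (x.1.2, x.2), hx2, ?_⟩
        have : f (x.1.2, x.2) = x := by
          simp only [hf]
          rw [← hx1]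
        rw [hmk]
        rw [show (((⊤ : WithTop ℤ), x.1.2), x.2) = x from this]
    have hDclosed : IsClosed D := by
      apply IsClosed.inter
      · exact isClosed_singleton.preimage (continuous_fst.comp continuous_fst)
      · exact (hC.preimage continuous_quot_mk).preimage
          ((continuous_snd.comp continuous_fst).prodMk continuous_snd)
    have hsat : Quot.mk W ⁻¹' (Quot.mk W '' D) = D := by
      ext x
      constructor
      · rintro ⟨d, ⟨hd1, hd2⟩, hdx⟩
        have hE : Relation.EqvGen W d x := Quot.eq.mp hdx
        obtain ⟨hiff, hgen⟩ := eqvGen_top σ hE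
        refine ⟨hiff.mp hd1, ?_⟩
        have h2 := hgen hd1
        have : Quot.mk V (d.1.2, d.2) = Quot.mk V (x.1.2, x.2) := Quot.eqvGen_sound h2
        simpa [← this] using hd2
      · intro hx
        exact ⟨x, hx, rfl⟩
    rw [himg, ← (isQuotientMap_quot_mk (r := W)).isClosed_preimage, hsat]
    exact hDclosed
  have hemb : Topology.IsClosedEmbedding j :=
    Topology.IsClosedEmbedding.of_continuous_injective_isClosedMap hcont hinj hclosed
  -- range description
  have hrange : Set.range j =
      {q : Quot W | ∃ (φ : Y) (z : Circle),
        q = Quot.mk _ (((⊤ : WithTop ℤ), φ), z)} := by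
    ext q
    constructor
    · rintro ⟨r, rfl⟩
      obtain ⟨⟨φ, z⟩, rfl⟩ := Quot.exists_rep r
      exact ⟨φ, z, rfl⟩
    · rintro ⟨φ, z, rfl⟩
      exact ⟨Quot.mk _ (φ, z), rfl⟩
  refine ⟨j, hmk, hemb.toIsEmbedding, hrange, hemb.isClosed_range, ?_⟩
  -- range j = (range iotaQ)ᶜ
  ext q
  simp only [Set.mem_compl_iff, Set.mem_range]
  constructor
  · rintro ⟨r, rfl⟩ ⟨ψ, hψ⟩
    obtain ⟨⟨φ, z⟩, rfl⟩ := Quot.exists_rep r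
    rw [hmk] at hψ
    have hE : Relation.EqvGen W ((((0 : ℤ) : WithTop ℤ), ψ), (1 : Circle))
        (((⊤ : WithTop ℤ), φ), z) := Quot.eq.mp hψ
    have := (eqvGen_top σ hE).1
    simp at this
  · intro hq
    obtain ⟨⟨⟨m, y⟩, z⟩, rfl⟩ := Quot.exists_rep q
    cases m with
    | top => exact ⟨Quot.mk _ (y, z), rfl⟩
    | coe k =>
        exfalso
        apply hq
        refine ⟨y, ?_⟩
        show Quot.mk W ((((0 : ℤ) : WithTop ℤ), y), (1 : Circle)) =
          Quot.mk W ((((k : ℤ) : WithTop ℤ), y), z)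
        apply Quot.sound
        constructor
        · have hr : (Set.range fun n : ℤ => actZ σ n (((0 : ℤ) : WithTop ℤ), y)) =
              Set.range fun n : ℤ => actZ σ n (((k : ℤ) : WithTop ℤ), y) := by
            ext x
            simp only [Set.mem_range, actZ_coe σ]
            constructor
            · rintro ⟨n, rfl⟩
              exact ⟨n - k, by rw [show k + (n - k) = 0 + n from by ring]⟩
            · rintro ⟨n, rfl⟩
              exact ⟨k + n, by rw [show (0 : ℤ) + (k + n) = k + n from by ring]⟩
          rw [hr]
        · intro n hn
          rw [actZ_coe σ] at hn
          have h1 : ((0 + n : ℤ) : WithTop ℤ) = ((0 : ℤ) : WithTop ℤ) :=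
            congrArg Prod.fst hn
          have h0 : (0 : ℤ) + n = 0 := by exact_mod_cast h1
          have : n = 0 := by omega
          subst this
          simp
end
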